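/- Let s_N be a sequence of integers with s_N/N → σ ∈ (0, 1/2]. Then (1/N)·Σ_{k=1}^{s_N} log|2 sin(kπ/N)| → ∫_0^{σ} log|2 sin(πt)| dt = −Λ(σπ)/π as N → ∞. -/

import Mathlib

open Real Finset Filter intervalIntegral

open MeasureTheory

namespace RSLL

noncomputable def f (t : ℝ) : ℝ := Real.log |2 * Real.sin (Real.pi * t)|

lemma sin_pos' {t : ℝ} (h0 : 0 < t) (h1 : t < 1) : 0 < Real.sin (Real.pi * t) :=
  Real.sin_pos_of_pos_of_lt_pi (by positivity) (by nlinarith [Real.pi_pos])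

lemma f_eq {t : ℝ} (h0 : 0 < t) (h1 : t < 1) :
    f t = Real.log (2 * Real.sin (Real.pi * t)) := by
  rw [f, abs_of_pos (by have := sin_pos' h0 h1; linarith)]

lemma f_mono : MonotoneOn f (Set.Ioc (0:ℝ) (1/2)) := by
  intro a ha b hb hab
  rw [f_eq ha.1 (by linarith [ha.2]), f_eq (lt_of_lt_of_le ha.1 hab) (by linarith [hb.2])]
  have hpi := Real.pi_pos
  have hsab : Real.sin (Real.pi * a) ≤ Real.sin (Real.pi * b) := by
    apply Real.sin_le_sin_of_le_of_le_pi_div_two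
    · nlinarith [ha.1]
    · nlinarith [hb.2]
    · nlinarith
  have := sin_pos' ha.1 (by linarith [ha.2])
  exact Real.log_le_log (by linarith) (by linarith)

lemma f_le_log2 (t : ℝ) : f t ≤ Real.log 2 := by
  rcases eq_or_ne (|2 * Real.sin (Real.pi * t)|) 0 with h | h
  · rw [f, h, Real.log_zero]
    positivity
  · apply Real.log_le_log (lt_of_le_of_ne (abs_nonneg _) (Ne.symm h))
    rw [abs_mul, abs_two]
    nlinarith [abs_le.mpr ⟨Real.neg_one_le_sin (Real.pi * t), Real.sin_le_one (Real.pi * t)⟩]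

lemma f_bounds {t : ℝ} (ht : t ∈ Set.Ioc (0:ℝ) (1/2)) :
    Real.log (4 * t) ≤ f t ∧ f t ≤ Real.log (8 * t) := by
  obtain ⟨h0, h2⟩ := ht
  have hpi := Real.pi_pos
  have hpile := Real.pi_le_four
  rw [f_eq h0 (by linarith)]
  have hlb : 2 * t ≤ Real.sin (Real.pi * t) := by
    have := Real.mul_le_sin (x := Real.pi * t) (by positivity) (by nlinarith)
    calc 2 * t = 2 / Real.pi * (Real.pi * t) := by field_simp
    _ ≤ _ := this
  have hub : Real.sin (Real.pi * t) ≤ 4 * t := by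
    have := Real.sin_le (by positivity : 0 ≤ Real.pi * t)
    nlinarith
  constructor
  · exact Real.log_le_log (by positivity) (by linarith)
  · exact Real.log_le_log (by nlinarith) (by linarith)

lemma f_nonneg {t : ℝ} (h1 : 1/6 ≤ t) (h2 : t ≤ 5/6) : 0 ≤ f t := by
  have h0 : (0:ℝ) < t := by linarith
  have h1' : t < 1 := by linarith
  rw [f_eq h0 h1']
  have : (1:ℝ) ≤ 2 * Real.sin (Real.pi * t) := by
    have key : Real.sin (Real.pi * t) ≥ 1/2 := by
      have hs : ∀ u : ℝ, 1/6 ≤ u → u ≤ 1/2 → 1/2 ≤ Real.sin (Real.pi * u) := by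
        intro u hu1 hu2
        have := Real.sin_pi_div_six
        have hmono : Real.sin (Real.pi * (1/6)) ≤ Real.sin (Real.pi * u) := by
          apply Real.sin_le_sin_of_le_of_le_pi_div_two
          · nlinarith [Real.pi_pos]
          · nlinarith [Real.pi_pos]
          · nlinarith [Real.pi_pos]
        calc (1:ℝ)/2 = Real.sin (Real.pi / 6) := this.symm
          _ = Real.sin (Real.pi * (1/6)) := by ring_nf
          _ ≤ _ := hmono
      rcases le_total t (1/2) with h | h
      · exact hs t h1 h
      · have := hs (1 - t) (by linarith) (by linarith)
        have heq : Real.sin (Real.pi * (1 - t)) = Real.sin (Real.pi * t) := by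
          rw [mul_sub, mul_one, Real.sin_pi_sub]
        linarith [heq ▸ this]
    linarith
  calc (0:ℝ) = Real.log 1 := Real.log_one.symm
  _ ≤ _ := Real.log_le_log one_pos this

lemma f_integrableOn : IntegrableOn f (Set.Ioc (0:ℝ) (1/2)) volume := by
  have hmeas : AEStronglyMeasurable f (volume.restrict (Set.Ioc (0:ℝ) (1/2))) := by
    apply Measurable.aestronglyMeasurable
    exact Real.measurable_log.comp
      ((measurable_const.mul (Real.measurable_sin.comp (measurable_const.mul measurable_id))).abs)
  have hg : IntegrableOn (fun t : ℝ => Real.log 8 + 2 * t ^ (-(1:ℝ)/2)) 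
      (Set.Ioc (0:ℝ) (1/2)) volume := by
    apply Integrable.add
    · exact integrableOn_const (by simp)
    · have := (intervalIntegral.intervalIntegrable_rpow' (a := 0) (b := 1/2)
        (r := -(1:ℝ)/2) (by norm_num))
      rw [intervalIntegrable_iff_integrableOn_Ioc_of_le (by norm_num)] at this
      exact this.const_mul 2
  apply Integrable.mono hg hmeas
  rw [ae_restrict_iff' measurableSet_Ioc]
  apply ae_of_all
  intro t ht
  obtain ⟨hlb, hub⟩ := f_bounds ht
  have h0 := ht.1
  have h2 := ht.2
  have habs : |f t| ≤ -Real.log t + Real.log 8 := by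
    rw [abs_le]
    have e4 : Real.log (4 * t) = Real.log 4 + Real.log t := 
      Real.log_mul (by norm_num) (ne_of_gt h0)
    have e8 : Real.log (8 * t) = Real.log 8 + Real.log t := 
      Real.log_mul (by norm_num) (ne_of_gt h0)
    have hlt : Real.log t ≤ 0 := Real.log_nonpos (le_of_lt h0) (by linarith)
    have h48 : Real.log 4 ≤ Real.log 8 := Real.log_le_log (by norm_num) (by norm_num)
    have h4 : 0 ≤ Real.log 4 := Real.log_nonneg (by norm_num)
    have h8 : 0 ≤ Real.log 8 := Real.log_nonneg (by norm_num)
    constructor <;> [skip; skip] <;> rw [e4] at hlb <;> rw [e8] at hub <;> linarith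
  have hrpow : -Real.log t ≤ 2 * t ^ (-(1:ℝ)/2) := by
    have h1 : Real.log t = -Real.log (t ^ (-(1:ℝ)/2)) * 2 := by
      rw [Real.log_rpow h0]; ring
    have hxp : (0:ℝ) < t ^ (-(1:ℝ)/2) := Real.rpow_pos_of_pos h0 _
    have h2' : Real.log (t ^ (-(1:ℝ)/2)) ≤ t ^ (-(1:ℝ)/2) := 
      (Real.log_le_sub_one_of_pos hxp).trans (by linarith)
    nlinarith [Real.rpow_pos_of_pos h0 (-(1:ℝ)/2)]
  rw [Real.norm_eq_abs, Real.norm_eq_abs]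
  have hpos : 0 ≤ Real.log 8 + 2 * t ^ (-(1:ℝ)/2) := by
    have := Real.rpow_pos_of_pos h0 (-(1:ℝ)/2)
    have h8 : 0 ≤ Real.log 8 := Real.log_nonneg (by norm_num)
    linarith
  rw [abs_of_nonneg hpos]
  linarith

lemma f_intervalIntegrable {a b : ℝ} (ha : 0 ≤ a) (ha' : a ≤ 1/2) (hb : 0 ≤ b) (hb' : b ≤ 1/2) :
    IntervalIntegrable f volume a b := by
  have h0 : IntervalIntegrable f volume 0 (1/2) := by
    rw [intervalIntegrable_iff_integrableOn_Ioc_of_le (by norm_num)]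
    exact f_integrableOn
  exact h0.mono_set (Set.uIcc_subset_uIcc (by simp [Set.mem_uIcc]; constructor <;> linarith)
    (by simp [Set.mem_uIcc]; constructor <;> linarith))

lemma integral_le_f_mul {a b : ℝ} (h0 : 0 ≤ a) (hab : a ≤ b) (hb : b ≤ 1/2) :
    ∫ t in a..b, f t ≤ f b * (b - a) := by
  rcases eq_or_lt_of_le hab with rfl | hab'
  · simp
  rw [intervalIntegral.integral_of_le hab]
  have hconst : ∫ t in Set.Ioc a b, f b ∂volume = f b * (b - a) := by
    rw [MeasureTheory.setIntegral_const, measureReal_def, Real.volume_Ioc, smul_eq_mul,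
      ENNReal.toReal_ofReal (by linarith)]
    ring
  rw [← hconst]
  apply MeasureTheory.setIntegral_mono_on
  · rw [← intervalIntegrable_iff_integrableOn_Ioc_of_le hab]
    exact f_intervalIntegrable h0 (by linarith) (by linarith) hb
  · exact integrableOn_const (by simp)
  · exact measurableSet_Ioc
  · intro t ht
    exact f_mono ⟨lt_of_le_of_lt h0 ht.1, le_trans ht.2 hb⟩ ⟨lt_of_le_of_lt h0 hab', hb⟩ ht.2

lemma f_mul_le_integral {a b : ℝ} (h0 : 0 < a) (hab : a ≤ b) (hb : b ≤ 1/2) :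
    f a * (b - a) ≤ ∫ t in a..b, f t := by
  rw [intervalIntegral.integral_of_le hab]
  have hconst : ∫ t in Set.Ioc a b, f a ∂volume = f a * (b - a) := by
    rw [MeasureTheory.setIntegral_const, measureReal_def, Real.volume_Ioc, smul_eq_mul,
      ENNReal.toReal_ofReal (by linarith)]
    ring
  rw [← hconst]
  apply MeasureTheory.setIntegral_mono_on
  · exact integrableOn_const (by simp)
  · rw [← intervalIntegrable_iff_integrableOn_Ioc_of_le hab]
    exact f_intervalIntegrable (le_of_lt h0) (by linarith) (by linarith) hb
  · exact measurableSet_Ioc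
  · intro t ht
    exact f_mono ⟨h0, by linarith⟩ ⟨lt_trans h0 ht.1, le_trans ht.2 hb⟩ (le_of_lt ht.1)

lemma Icc_sum_eq (g : ℕ → ℝ) (m : ℕ) :
    ∑ k ∈ Finset.Icc 1 m, g k = ∑ k ∈ Finset.range m, g (k+1) := by
  rw [← Finset.Ico_add_one_right_eq_Icc, Finset.sum_Ico_eq_sum_range]
  have : m + 1 - 1 = m := rfl
  rw [this]
  exact Finset.sum_congr rfl fun k _ => by rw [add_comm]

lemma sum_lower {N m : ℕ} (hN : 1 ≤ N) (hm : (m:ℝ)/N ≤ 1/2) :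
    ∫ t in (0:ℝ)..((m:ℝ)/N), f t ≤ (1/(N:ℝ)) * ∑ k ∈ Finset.range m, f (((k:ℝ)+1)/N) := by
  have hN0 : (0:ℝ) < N := by exact_mod_cast hN
  set a : ℕ → ℝ := fun k => (k:ℝ)/N with ha
  have hmono : ∀ k : ℕ, k ≤ m → a k ≤ 1/2 := by
    intro k hk
    have hk' : (k:ℝ) ≤ m := by exact_mod_cast hk
    exact le_trans ((div_le_div_iff_of_pos_right hN0).mpr hk') hm
  have hstep : ∀ k : ℕ, a k ≤ a (k+1) := by
    intro k
    apply (div_le_div_iff_of_pos_right hN0).mpr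
    push_cast; linarith
  have hint : ∀ k, k < m → IntervalIntegrable f volume (a k) (a (k+1)) := by
    intro k hk
    exact f_intervalIntegrable (by positivity) (hmono k hk.le) (by positivity) (hmono (k+1) hk)
  have hsum := intervalIntegral.sum_integral_adjacent_intervals (a := a) (μ := volume) hint
  have ha0 : a 0 = 0 := by simp [ha]
  calc ∫ t in (0:ℝ)..((m:ℝ)/N), f t = ∑ k ∈ Finset.range m, ∫ x in a k..a (k+1), f x := by
        rw [hsum, ha0]
    _ ≤ ∑ k ∈ Finset.range m, f (a (k+1)) * (1/N) := by
        apply Finset.sum_le_sum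
        intro k hk
        have h := integral_le_f_mul (a := a k) (b := a (k+1)) (by positivity) (hstep k)
          (hmono (k+1) (Finset.mem_range.mp hk))
        have hdiff : a (k+1) - a k = 1/(N:ℝ) := by
          simp only [ha]; push_cast; field_simp; ring
        rw [hdiff] at h
        exact h
    _ = (1/(N:ℝ)) * ∑ k ∈ Finset.range m, f (((k:ℝ)+1)/N) := by
        rw [Finset.mul_sum]
        apply Finset.sum_congr rfl
        intro k _
        have : a (k+1) = ((k:ℝ)+1)/N := by simp only [ha]; push_cast; ring
        rw [this, mul_comm]

lemma sum_upper' (N : ℕ) (hN : 1 ≤ N) (m : ℕ) (hm1 : 1 ≤ m) (hm : (m:ℝ)/N ≤ 1/2) :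
    (1/(N:ℝ)) * ∑ k ∈ Finset.range m, f (((k:ℝ)+1)/N) ≤
      (∫ t in (1/(N:ℝ))..((m:ℝ)/N), f t) + f ((m:ℝ)/N) * (1/N) := by
  have hN0 : (0:ℝ) < N := by exact_mod_cast hN
  induction m, hm1 using Nat.le_induction with
  | base =>
    simp only [Nat.cast_one, Finset.sum_range_one, Nat.cast_zero, zero_add,
      intervalIntegral.integral_same]
    rw [mul_comm]
  | succ n hn ih =>
    have hn1 : (1:ℝ) ≤ (n:ℝ) := by exact_mod_cast hn
    have hcast : ((n + 1 : ℕ) : ℝ) = (n:ℝ) + 1 := by push_cast; ring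
    rw [hcast] at hm
    have hnn : (n:ℝ)/N ≤ 1/2 := by
      refine le_trans ?_ hm
      apply (div_le_div_iff_of_pos_right hN0).mpr
      linarith
    have h1N : 1/(N:ℝ) ≤ 1/2 := by
      refine le_trans ?_ hnn
      apply (div_le_div_iff_of_pos_right hN0).mpr
      linarith
    have ih' := ih hnn
    have hkey : f ((n:ℝ)/N) * (1/N) ≤ ∫ t in ((n:ℝ)/N)..((n:ℝ)+1)/N, f t := by
      have h := f_mul_le_integral (a := (n:ℝ)/N) (b := ((n:ℝ)+1)/N)
        (by positivity) (by apply (div_le_div_iff_of_pos_right hN0).mpr; linarith) hm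
      have hdiff : ((n:ℝ)+1)/N - (n:ℝ)/N = 1/(N:ℝ) := by field_simp; ring
      rw [hdiff] at h
      exact h
    have hadd : (∫ t in (1/(N:ℝ))..((n:ℝ)/N), f t) + ∫ t in ((n:ℝ)/N)..((n:ℝ)+1)/N, f t
        = ∫ t in (1/(N:ℝ))..((n:ℝ)+1)/N, f t := by
      apply intervalIntegral.integral_add_adjacent_intervals
      · exact f_intervalIntegrable (by positivity) h1N (by positivity) hnn
      · exact f_intervalIntegrable (by positivity) hnn (by positivity) hm
    rw [Finset.sum_range_succ, mul_add, hcast]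
    calc (1/(N:ℝ)) * ∑ k ∈ Finset.range n, f (((k:ℝ)+1)/N) + (1/(N:ℝ)) * f (((n:ℝ)+1)/N)
        ≤ ((∫ t in (1/(N:ℝ))..((n:ℝ)/N), f t) + f ((n:ℝ)/N) * (1/N))
          + (1/(N:ℝ)) * f (((n:ℝ)+1)/N) := by linarith
      _ ≤ (∫ t in (1/(N:ℝ))..((n:ℝ)+1)/N, f t) + f (((n:ℝ)+1)/N) * (1/N) := by
          rw [← hadd]; linarith

lemma sum_upper {N m : ℕ} (hN : 1 ≤ N) (hm1 : 1 ≤ m) (hm : (m:ℝ)/N ≤ 1/2) :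
    (1/(N:ℝ)) * ∑ k ∈ Finset.range m, f (((k:ℝ)+1)/N) ≤
      (∫ t in (1/(N:ℝ))..((m:ℝ)/N), f t) + Real.log 2 * (1/N) := by
  have hN0 : (0:ℝ) < N := by exact_mod_cast hN
  refine (sum_upper' N hN m hm1 hm).trans ?_
  have := f_le_log2 ((m:ℝ)/N)
  have h1N : (0:ℝ) ≤ 1/N := by positivity
  nlinarith

end RSLL

theorem riemann_sum_limit_lobachevsky
    (Λ : ℝ → ℝ) (hΛ : ∀ x : ℝ, Λ x = -∫ t in (0:ℝ)..x, Real.log |2 * Real.sin t|)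
    (s : ℕ → ℕ) (σ : ℝ) (hσ : σ ∈ Set.Ioc (0:ℝ) (1 / 2))
    (hs : Filter.Tendsto (fun N : ℕ => (s N : ℝ) / N) Filter.atTop (nhds σ)) :
    Filter.Tendsto
        (fun N : ℕ => (1 / (N : ℝ)) * ∑ k ∈ Finset.Icc 1 (s N),
          Real.log |2 * Real.sin (k * Real.pi / N)|)
        Filter.atTop (nhds (∫ t in (0:ℝ)..σ, Real.log |2 * Real.sin (Real.pi * t)|)) ∧
      (∫ t in (0:ℝ)..σ, Real.log |2 * Real.sin (Real.pi * t)|) = -Λ (σ * Real.pi) / Real.pi := by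
  obtain ⟨hσ0, hσ2⟩ := hσ
  have hπ : (0:ℝ) < Real.pi := Real.pi_pos
  constructor
  · -- the limit statement
    have hgoal : ∀ N : ℕ, (1 / (N : ℝ)) * ∑ k ∈ Finset.Icc 1 (s N),
        Real.log |2 * Real.sin ((k:ℝ) * Real.pi / N)| =
        (1 / (N : ℝ)) * ∑ k ∈ Finset.range (s N), RSLL.f (((k:ℝ)+1)/N) := by
      intro N
      rw [RSLL.Icc_sum_eq (fun k => Real.log |2 * Real.sin ((k:ℝ) * Real.pi / N)|) (s N)]
      congr 1
      apply Finset.sum_congr rfl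
      intro k _
      have harg : ((k+1:ℕ):ℝ) * Real.pi / N = Real.pi * (((k:ℝ)+1)/N) := by
        push_cast; ring
      rw [harg, RSLL.f]
    have htgt : (∫ t in (0:ℝ)..σ, Real.log |2 * Real.sin (Real.pi * t)|)
        = ∫ t in (0:ℝ)..σ, RSLL.f t := rfl
    rw [htgt]
    simp only [hgoal]
    -- notation
    set x : ℕ → ℝ := fun N => (s N : ℝ)/N with hxdef
    set I : ℝ → ℝ := fun u => ∫ t in (0:ℝ)..u, RSLL.f t with hIdef
    set y : ℕ → ℝ := fun N => ((min (s N) (N/2) : ℕ) : ℝ)/N with hydef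
    -- basic bounds on nat division
    have hhalf_le : ∀ N : ℕ, ((N/2 : ℕ) : ℝ) ≤ (N:ℝ)/2 := by
      intro N
      have h2 : (N/2) * 2 ≤ N := Nat.div_mul_le_self N 2
      have : ((N/2 : ℕ) : ℝ) * 2 ≤ (N:ℝ) := by exact_mod_cast h2
      linarith
    have hhalf_ge : ∀ N : ℕ, ((N:ℝ) - 1)/2 ≤ ((N/2 : ℕ) : ℝ) := by
      intro N
      have h2 : N ≤ (N/2) * 2 + 1 := by omega
      have : (N:ℝ) ≤ ((N/2 : ℕ) : ℝ) * 2 + 1 := by exact_mod_cast h2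
      linarith
    have hy_half : ∀ N : ℕ, 1 ≤ N → y N ≤ 1/2 := by
      intro N hN
      have hN0 : (0:ℝ) < N := by exact_mod_cast hN
      rw [hydef]
      have h1 : ((min (s N) (N/2) : ℕ) : ℝ) ≤ ((N/2 : ℕ) : ℝ) := by
        exact_mod_cast Nat.cast_le.mpr (min_le_right _ _)
      have := hhalf_le N
      rw [div_le_div_iff₀ hN0 (by norm_num : (0:ℝ) < 2)]
      linarith
    have hy_nonneg : ∀ N : ℕ, 0 ≤ y N := by
      intro N; rw [hydef]; positivity
    have hy_le_x : ∀ N : ℕ, y N ≤ x N := by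
      intro N
      rcases Nat.eq_zero_or_pos N with h | h
      · simp [hydef, hxdef, h]
      have hN0 : (0:ℝ) < N := by exact_mod_cast h
      apply (div_le_div_iff_of_pos_right hN0).mpr
      exact_mod_cast Nat.cast_le.mpr (min_le_left _ _)
    -- tendsto of y
    have hyT : Filter.Tendsto y Filter.atTop (nhds σ) := by
      have hhalfT : Filter.Tendsto (fun N : ℕ => ((N/2 : ℕ) : ℝ)/N) Filter.atTop
          (nhds (1/2)) := by
        have hlow : Filter.Tendsto (fun N : ℕ => 1/2 - 1/(N:ℝ)) Filter.atTop (nhds (1/2)) := by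
          have h := (tendsto_const_nhds (x := (1:ℝ)/2) (f := Filter.atTop (α := ℕ))).sub
            tendsto_one_div_atTop_nhds_zero_nat
          simpa using h
        apply tendsto_of_tendsto_of_tendsto_of_le_of_le' hlow
          (tendsto_const_nhds (x := (1:ℝ)/2))
        · filter_upwards [Filter.eventually_ge_atTop 1] with N hN
          have hN0 : (0:ℝ) < N := by exact_mod_cast hN
          rw [le_div_iff₀ hN0]
          have h1 : (1/2 - 1/(N:ℝ)) * N = N/2 - 1 := by field_simp
          rw [h1]
          linarith [hhalf_ge N]
        · filter_upwards [Filter.eventually_ge_atTop 1] with N hN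
          have hN0 : (0:ℝ) < N := by exact_mod_cast hN
          rw [div_le_iff₀ hN0]
          have h1 : (1:ℝ)/2 * N = N/2 := by ring
          rw [h1]
          exact hhalf_le N
      have hminT := hs.min hhalfT
      rw [min_eq_left hσ2] at hminT
      apply hminT.congr'
      filter_upwards [Filter.eventually_ge_atTop 1] with N hN
      have hN0 : (0:ℝ) < N := by exact_mod_cast hN
      simp only [hxdef, hydef, Nat.cast_min]
      rw [min_div_div_right (le_of_lt hN0)]
    -- continuity of the primitive
    have hIint : MeasureTheory.IntegrableOn RSLL.f (Set.Icc (0:ℝ) (1/2)) volume := by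
      rw [integrableOn_Icc_iff_integrableOn_Ioc]
      exact RSLL.f_integrableOn
    have hIcont : ContinuousOn I (Set.Icc (0:ℝ) (1/2)) := by
      have h := intervalIntegral.continuousOn_primitive_interval (a := (0:ℝ)) (b := 1/2)
        (μ := volume) (f := RSLL.f) (by rwa [Set.uIcc_of_le (by norm_num)])
      rwa [Set.uIcc_of_le (by norm_num)] at h
    have hσmem : σ ∈ Set.Icc (0:ℝ) (1/2) := ⟨le_of_lt hσ0, hσ2⟩
    have hIy : Filter.Tendsto (fun N => I (y N)) Filter.atTop (nhds (I σ)) := by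
      have hcw : ContinuousWithinAt I (Set.Icc (0:ℝ) (1/2)) σ := hIcont σ hσmem
      apply hcw.tendsto.comp
      apply tendsto_nhdsWithin_of_tendsto_nhds_of_eventually_within _ hyT
      filter_upwards [Filter.eventually_ge_atTop 1] with N hN
      exact ⟨hy_nonneg N, hy_half N hN⟩
    have hI1 : Filter.Tendsto (fun N : ℕ => I (1/(N:ℝ))) Filter.atTop (nhds 0) := by
      have hI0 : I 0 = 0 := intervalIntegral.integral_same
      have hcw : ContinuousWithinAt I (Set.Icc (0:ℝ) (1/2)) 0 :=
        hIcont 0 (by constructor <;> norm_num)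
      have hev : ∀ᶠ N : ℕ in Filter.atTop, 1/(N:ℝ) ∈ Set.Icc (0:ℝ) (1/2) := by
        filter_upwards [Filter.eventually_ge_atTop 2] with N hN
        have hN2 : (2:ℝ) ≤ N := by exact_mod_cast hN
        constructor
        · positivity
        · exact one_div_le_one_div_of_le (by norm_num) hN2
      have h := hcw.tendsto.comp
        (tendsto_nhdsWithin_of_tendsto_nhds_of_eventually_within _
          tendsto_one_div_atTop_nhds_zero_nat hev)
      rw [hI0] at h
      exact h
    have hU : Filter.Tendsto (fun N : ℕ => I (y N) - I (1/(N:ℝ)) + Real.log 2 * (1/(N:ℝ))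
        + (x N - y N) * Real.log 2) Filter.atTop (nhds (I σ)) := by
      have hlog2 : Filter.Tendsto (fun N : ℕ => Real.log 2 * (1/(N:ℝ))) Filter.atTop
          (nhds 0) := by
        have h := tendsto_one_div_atTop_nhds_zero_nat.const_mul (Real.log 2)
        simpa using h
      have hεT : Filter.Tendsto (fun N : ℕ => (x N - y N) * Real.log 2) Filter.atTop
          (nhds 0) := by
        have h := (hs.sub hyT).mul_const (Real.log 2)
        simpa using h
      have h := ((hIy.sub hI1).add hlog2).add hεT
      simpa using h
    -- eventual bounds
    have hev2 : ∀ᶠ N : ℕ in Filter.atTop, σ/2 < x N :=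
      hs.eventually (eventually_gt_nhds (by linarith))
    have hev3 : ∀ᶠ N : ℕ in Filter.atTop, x N < 3/5 :=
      hs.eventually (eventually_lt_nhds (by linarith))
    apply tendsto_of_tendsto_of_tendsto_of_le_of_le' hIy hU
    · -- lower bound
      filter_upwards [Filter.eventually_ge_atTop 4, hev2, hev3] with N hN4 hxlb hxub
      have hN1 : 1 ≤ N := by omega
      have hN0 : (0:ℝ) < N := by exact_mod_cast hN1
      have hsN1 : 1 ≤ s N := by
        by_contra h
        have h0 : s N = 0 := by omega
        rw [hxdef] at hxlb
        simp only [h0, Nat.cast_zero, zero_div] at hxlb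
        linarith
      set n' : ℕ := min (s N) (N/2) with hn'def
      have hn'le : n' ≤ s N := by omega
      have hsplit : ∑ k ∈ Finset.range (s N), RSLL.f (((k:ℝ)+1)/N)
          = ∑ k ∈ Finset.range n', RSLL.f (((k:ℝ)+1)/N)
            + ∑ k ∈ Finset.Ico n' (s N), RSLL.f (((k:ℝ)+1)/N) := by
        have h := Finset.sum_Ico_consecutive (fun k : ℕ => RSLL.f (((k:ℝ)+1)/N))
          (Nat.zero_le n') hn'le
        simp only [← Finset.range_eq_Ico] at h
        exact h.symm
      have hyn : y N = ((n' : ℕ) : ℝ)/(N:ℝ) := by simp only [hydef, hn'def]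
      have h1 := RSLL.sum_lower (N := N) (m := n') hN1 (hyn ▸ hy_half N hN1)
      rw [← hyn] at h1
      have h2 : 0 ≤ ∑ k ∈ Finset.Ico n' (s N), RSLL.f (((k:ℝ)+1)/N) := by
        apply Finset.sum_nonneg
        intro k hk
        rw [Finset.mem_Ico] at hk
        have hn'eq : n' = N/2 := by omega
        have hk1 : ((N/2 : ℕ):ℝ) ≤ (k:ℝ) := by
          exact_mod_cast Nat.cast_le.mpr (hn'eq ▸ hk.1)
        have hk2 : ((k:ℝ)+1) ≤ (s N : ℝ) := by exact_mod_cast Nat.succ_le_of_lt hk.2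
        apply RSLL.f_nonneg
        · rw [le_div_iff₀ hN0]
          have := hhalf_ge N
          linarith
        · have : ((k:ℝ)+1)/N ≤ x N := by
            rw [hxdef]
            exact (div_le_div_iff_of_pos_right hN0).mpr hk2
          linarith
      rw [hsplit, mul_add]
      have h3 : 0 ≤ (1/(N:ℝ)) * ∑ k ∈ Finset.Ico n' (s N), RSLL.f (((k:ℝ)+1)/N) :=
        mul_nonneg (by positivity) h2
      have h4 : I (y N) ≤ (1/(N:ℝ)) * ∑ k ∈ Finset.range n', RSLL.f (((k:ℝ)+1)/N) := by
        have hIeq : I (y N) = ∫ t in (0:ℝ)..(y N), RSLL.f t := by simp only [hIdef]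
        rw [hIeq]
        exact h1
      linarith
    · -- upper bound
      filter_upwards [Filter.eventually_ge_atTop 4, hev2, hev3] with N hN4 hxlb hxub
      have hN1 : 1 ≤ N := by omega
      have hN0 : (0:ℝ) < N := by exact_mod_cast hN1
      have hsN1 : 1 ≤ s N := by
        by_contra h
        have h0 : s N = 0 := by omega
        rw [hxdef] at hxlb
        simp only [h0, Nat.cast_zero, zero_div] at hxlb
        linarith
      set n' : ℕ := min (s N) (N/2) with hn'def
      have hn'1 : 1 ≤ n' := by omega
      have hn'le : n' ≤ s N := by omega
      have hsplit : ∑ k ∈ Finset.range (s N), RSLL.f (((k:ℝ)+1)/N)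
          = ∑ k ∈ Finset.range n', RSLL.f (((k:ℝ)+1)/N)
            + ∑ k ∈ Finset.Ico n' (s N), RSLL.f (((k:ℝ)+1)/N) := by
        have h := Finset.sum_Ico_consecutive (fun k : ℕ => RSLL.f (((k:ℝ)+1)/N))
          (Nat.zero_le n') hn'le
        simp only [← Finset.range_eq_Ico] at h
        exact h.symm
      have hyn : y N = ((n' : ℕ) : ℝ)/(N:ℝ) := by simp only [hydef, hn'def]
      have h3 := RSLL.sum_upper (N := N) (m := n') hN1 hn'1 (hyn ▸ hy_half N hN1)
      rw [← hyn] at h3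
      have h1N2 : 1/(N:ℝ) ≤ 1/2 := by
        apply one_div_le_one_div_of_le (by norm_num)
        exact_mod_cast (by omega : 2 ≤ N)
      have hsub : I (y N) - I (1/(N:ℝ)) = ∫ t in (1/(N:ℝ))..(y N), RSLL.f t := by
        apply intervalIntegral.integral_interval_sub_left
        · exact RSLL.f_intervalIntegrable (le_refl 0) (by norm_num) (hy_nonneg N)
            (hy_half N hN1)
        · exact RSLL.f_intervalIntegrable (le_refl 0) (by norm_num) (by positivity) h1N2
      have h4 : ∑ k ∈ Finset.Ico n' (s N), RSLL.f (((k:ℝ)+1)/N)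
          ≤ ((s N : ℝ) - (n' : ℝ)) * Real.log 2 := by
        have hcard := Finset.sum_le_card_nsmul (Finset.Ico n' (s N))
          (fun k => RSLL.f (((k:ℝ)+1)/N)) (Real.log 2) (fun k _ => RSLL.f_le_log2 _)
        rw [Nat.card_Ico, nsmul_eq_mul, Nat.cast_sub (min_le_left _ _)] at hcard
        exact hcard
      have hxy : (1/(N:ℝ)) * (((s N : ℝ) - (n' : ℝ)) * Real.log 2)
          = (x N - y N) * Real.log 2 := by
        rw [hxdef, hyn]
        field_simp
        try ring
      have h5 : (1/(N:ℝ)) * ∑ k ∈ Finset.Ico n' (s N), RSLL.f (((k:ℝ)+1)/N)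
          ≤ (x N - y N) * Real.log 2 := by
        rw [← hxy]
        exact mul_le_mul_of_nonneg_left h4 (by positivity)
      rw [hsplit, mul_add, hsub]
      have h6 : (1/(N:ℝ)) * ∑ k ∈ Finset.range n', RSLL.f (((k:ℝ)+1)/N)
          ≤ (∫ t in (1/(N:ℝ))..(y N), RSLL.f t) + Real.log 2 * (1/(N:ℝ)) := h3
      linarith
  · -- the integral identity
    have h := intervalIntegral.integral_comp_mul_left (a := (0:ℝ)) (b := σ)
      (c := Real.pi) (fun u => Real.log |2 * Real.sin u|) (ne_of_gt hπ)
    rw [hΛ]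
    rw [show Real.pi * σ = σ * Real.pi from mul_comm _ _] at h
    rw [mul_zero] at h
    rw [h]
    rw [smul_eq_mul]
    field_simp
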